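/- For every m and every environment μ, there exists an environment μ* that is m-counterfactually equivalent to μ and whose transition kernel T* and observation kernel Obs* are both deterministic (point masses), so that all stochasticity of μ* resides in its initial distribution T₀*. -/

import Mathlib

open scoped Classical
open Finset

/-- A POMDP without reward function ("environment"): finite sets of states, actions,
observations, a transition kernel `T`, an initial distribution `T0` and an
observation kernel `Obs`, all given as (row-)stochastic matrices of reals. -/
structure Env (S A O : Type) [Fintype S] [Fintype A] [Fintype O] where
  T : S → A → S → ℝ
  T0 : S → ℝ
  Obs : S → O → ℝ
  T_nonneg : ∀ s a s', 0 ≤ T s a s'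
  T_sum : ∀ s a, ∑ s', T s a s' = 1
  T0_nonneg : ∀ s, 0 ≤ T0 s
  T0_sum : ∑ s, T0 s = 1
  Obs_nonneg : ∀ s o, 0 ≤ Obs s o
  Obs_sum : ∀ s, ∑ o, Obs s o = 1

/-- A history `o₀a₁o₁…a_t o_t` is an initial observation together with a list of
action–observation pairs, stored in *reverse chronological order* (newest pair first). -/
abbrev Hist (A O : Type) := O × List (A × O)

/-- `HPrefix h h'` : the history `h` is an initial segment of `h'` (or equal to it). -/
def HPrefix {A O : Type} (h h' : Hist A O) : Prop := h.1 = h'.1 ∧ h.2 <:+ h'.2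

/-- A policy maps histories to probability distributions over actions. -/
structure Policy (A O : Type) [Fintype A] where
  act : Hist A O → A → ℝ
  nonneg : ∀ h a, 0 ≤ act h a
  sum_one : ∀ h, ∑ a, act h a = 1

/-- A deterministic policy: each output distribution is a point mass. -/
def Policy.IsDet {A O : Type} [Fintype A] (π : Policy A O) : Prop :=
  ∀ h, ∃ a, ∀ a', π.act h a' = if a' = a then 1 else 0

variable {S S' S'' A O : Type}

/-- Joint probability of a history together with the final state:
`histStateProb μ π o₀ l s` is the probability under `μ` and `π` of seeing the history
`(o₀, l)` and the state after the last observation being `s`. -/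
noncomputable def histStateProb [Fintype S] [Fintype A] [Fintype O]
    (μ : Env S A O) (π : Policy A O) (o0 : O) : List (A × O) → S → ℝ
  | [], s => μ.T0 s * μ.Obs s o0
  | (a, o) :: rest, s =>
      π.act (o0, rest) a * (∑ s', histStateProb μ π o0 rest s' * μ.T s' a s) * μ.Obs s o

/-- `μ(h | π)`: the probability of the history `h` under policy `π`:
`μ(o₀a₁o₁…a_t o_t | π) = ∑_{s₀…s_t} T₀(s₀)Obs(o₀|s₀)∏_k Obs(o_k|s_k)T(s_k|s_{k-1},a_k)π(a_k|…)`. -/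
noncomputable def histProb [Fintype S] [Fintype A] [Fintype O]
    (μ : Env S A O) (π : Policy A O) (h : Hist A O) : ℝ :=
  ∑ s, histStateProb μ π h.1 h.2 s

/-- `μ(h' | h, π)`: conditional probability of a history given another, via Bayes' rule;
set to `0` when `h` is not an initial segment of `h'` or the conditioning event has
probability `0`. -/
noncomputable def condProb [Fintype S] [Fintype A] [Fintype O]
    (μ : Env S A O) (π : Policy A O) (h h' : Hist A O) : ℝ :=
  if HPrefix h h' ∧ histProb μ π h ≠ 0 then histProb μ π h' / histProb μ π h else 0

/-- `m`-equivalence: all conditional probabilities of histories of length `≤ m`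
coincide, for all policies. -/
def MEquiv [Fintype S] [Fintype S'] [Fintype A] [Fintype O]
    (μ : Env S A O) (μ' : Env S' A O) (m : ℕ) : Prop :=
  ∀ (π : Policy A O) (h h' : Hist A O), h.2.length ≤ m → h'.2.length ≤ m →
    condProb μ π h h' = condProb μ' π h h'

/-- A deterministic environment policy of length `m`: a triple `(T̂₀, T̂, Ô)` with
`T̂₀ ∈ S`, `T̂ : S × A × {1,…,m} → S` (here `Fin m` with value `i` standing for turn `i+1`)
and `Ô : S × {0,…,m} → O`. -/
abbrev EnvPol (S A O : Type) (m : ℕ) := S × (S → A → Fin m → S) × (S → Fin (m + 1) → O)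

/-- `μ(π_μ) = T₀(T̂₀) ⬝ ∏_{s,a,i} T(T̂(s,a,i)|s,a) ⬝ ∏_{s,i} Obs(Ô(s,i)|s)`. -/
noncomputable def envPolProb [Fintype S] [Fintype A] [Fintype O]
    (μ : Env S A O) {m : ℕ} (ep : EnvPol S A O m) : ℝ :=
  μ.T0 ep.1 *
    ((∏ s, ∏ a, ∏ i, μ.T s a (ep.2.1 s a i)) * ∏ s, ∏ i, μ.Obs s (ep.2.2 s i))

/-- The state reached by following the environment policy `ep` along the actions of the
(reverse chronological) action–observation list: `s₀ = T̂₀`, `s_k = T̂(s_{k-1}, a_k, k)`. -/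
def epState {m : ℕ} (ep : EnvPol S A O m) : List (A × O) → S
  | [] => ep.1
  | (a, _) :: rest =>
      if h : rest.length < m then ep.2.1 (epState ep rest) a ⟨rest.length, h⟩
      else epState ep rest

/-- `μ(h | π_μ, π)`: the probability of the history `h = (o₀, l)` when the dynamics are
determined by the environment policy `ep` and the actions are drawn from `π`; it is
`∏_k π(a_k | h_{k-1})` if the observations of `h` match those generated by `ep` along the
actions of `h`, and `0` otherwise. -/
noncomputable def epHistProb {m : ℕ} [Fintype A] (ep : EnvPol S A O m) (π : Policy A O)
    (o0 : O) : List (A × O) → ℝ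
  | [] => if ep.2.2 ep.1 0 = o0 then 1 else 0
  | (a, o) :: rest =>
      epHistProb ep π o0 rest * π.act (o0, rest) a *
        (if h : rest.length < m then
          (if ep.2.2 (ep.2.1 (epState ep rest) a ⟨rest.length, h⟩)
              ⟨rest.length + 1, by omega⟩ = o then 1 else 0)
         else 0)

/-- `m`-counterfactual equivalence: for every finite collection `(h_{t_i}, π_i)` of
history–policy pairs with all `t_i ≤ m`,
`∑_{π_μ} μ(π_μ) ∏_i μ(h_{t_i}|π_μ,π_i) = ∑_{π_{μ'}} μ'(π_{μ'}) ∏_i μ'(h_{t_i}|π_{μ'},π_i)`. -/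
def MCounterEquiv [Fintype S] [DecidableEq S] [Fintype S'] [DecidableEq S']
    [Fintype A] [DecidableEq A] [Fintype O]
    (μ : Env S A O) (μ' : Env S' A O) (m : ℕ) : Prop :=
  ∀ (n : ℕ) (hs : Fin n → Hist A O) (πs : Fin n → Policy A O),
    (∀ i, (hs i).2.length ≤ m) →
    (∑ ep : EnvPol S A O m, envPolProb μ ep * ∏ i, epHistProb ep (πs i) (hs i).1 (hs i).2)
      = ∑ ep : EnvPol S' A O m, envPolProb μ' ep * ∏ i, epHistProb ep (πs i) (hs i).1 (hs i).2

/-- A deterministic environment: every transition and observation distribution is a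
point mass. -/
def IsDetEnv [Fintype S] [Fintype A] [Fintype O] (μ : Env S A O) : Prop :=
  (∀ s a, ∃ s', ∀ s'', μ.T s a s'' = if s'' = s' then 1 else 0) ∧
  (∀ s, ∃ o, ∀ o', μ.Obs s o' = if o' = o then 1 else 0)

/-- `μ(h | s₀ = s, π)` (probability of the history conditional on the initial state),
with the final state summed out below. -/
noncomputable def histStateProbFrom [Fintype S] [Fintype A] [Fintype O]
    (μ : Env S A O) (π : Policy A O) (s0 : S) (o0 : O) : List (A × O) → S → ℝ
  | [], s => (if s = s0 then 1 else 0) * μ.Obs s o0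
  | (a, o) :: rest, s =>
      π.act (o0, rest) a *
        (∑ s', histStateProbFrom μ π s0 o0 rest s' * μ.T s' a s) * μ.Obs s o

/-- `μ(h | s₀ = s, π)`. -/
noncomputable def histProbFrom [Fintype S] [Fintype A] [Fintype O]
    (μ : Env S A O) (π : Policy A O) (s0 : S) (h : Hist A O) : ℝ :=
  ∑ s, histStateProbFrom μ π s0 h.1 h.2 s

/-- The posterior `μ(s₀ = s | h)` over the initial state given a history, computed by
Bayes' rule from any policy `π` with `μ(h|π) > 0` (it is independent of the choice of
such a policy), and set to `0` if no such policy exists. -/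
noncomputable def posterior [Fintype S] [Fintype A] [Fintype O]
    (μ : Env S A O) (h : Hist A O) (s : S) : ℝ :=
  if hex : ∃ π : Policy A O, 0 < histProb μ π h then
    μ.T0 s * histProbFrom μ hex.choose s h /
      ∑ s', μ.T0 s' * histProbFrom μ hex.choose s' h
  else 0

/-- Given `m`, a pure learning process on `μ` is a map `P` from histories of length `≤ m`
to `[0,1]` realized, on some deterministic environment `μ'` that is `m`-counterfactually
equivalent to `μ`, as `P(h) = ∑_{s'} p_{s'} μ'(s₀ = s' | h)` for constants `p_{s'} ∈ [0,1]`. -/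
def IsPureLearning [Fintype S] [DecidableEq S] [Fintype A] [DecidableEq A] [Fintype O]
    (μ : Env S A O) (m : ℕ) (P : Hist A O → ℝ) : Prop :=
  (∀ h : Hist A O, h.2.length ≤ m → P h ∈ Set.Icc (0 : ℝ) 1) ∧
  ∃ (S' : Type) (_ : Fintype S') (_ : DecidableEq S') (μ' : Env S' A O) (p : S' → ℝ),
    IsDetEnv μ' ∧ MCounterEquiv μ μ' m ∧ (∀ s', p s' ∈ Set.Icc (0 : ℝ) 1) ∧
    ∀ h : Hist A O, h.2.length ≤ m → P h = ∑ s', p s' * posterior μ' h s'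

/-- First components: the history (in reverse chronological order) generated after `t`
turns in a deterministic environment given by functions `(Td, Od)`, starting from state
`s0` and following the deterministic policy `p`; second component: the state reached. -/
def genHistAux (Td : S → A → S) (Od : S → O) (p : Hist A O → A) (s0 : S) :
    ℕ → List (A × O) × S
  | 0 => ([], s0)
  | t + 1 =>
      let r := genHistAux Td Od p s0 t
      let a := p (Od s0, r.1)
      let s' := Td r.2 a
      ((a, Od s') :: r.1, s')

/-- `f_{s0}(p)` truncated at length `t`: the unique history of length `t` generated from
the initial state `s0` by the deterministic policy `p` in the deterministic environment
given by the functions `(Td, Od)`. -/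
def genHist (Td : S → A → S) (Od : S → O) (p : Hist A O → A) (s0 : S) (t : ℕ) :
    Hist A O :=
  (Od s0, (genHistAux Td Od p s0 t).1)

/-- The fiber `F(f_s)` (for `s` a state of the deterministic environment `(Td', Od')`):
all initial states `s0` of the deterministic environment `(Td, Od)` whose generated-history
map `f_{s0} : Π₀ → H_m` equals `f_s`. -/
noncomputable def fiber [Fintype S] (Td : S → A → S) (Od : S → O)
    (Td' : S' → A → S') (Od' : S' → O) (m : ℕ) (s : S') : Finset S :=
  Finset.univ.filter fun s0 => ∀ p : Hist A O → A, genHist Td Od p s0 m = genHist Td' Od' p s m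

set_option maxHeartbeats 1000000
set_option synthInstance.maxHeartbeats 1000000
set_option synthInstance.maxSize 2048

set_option linter.unusedSectionVars false

namespace CFDet

lemma sum_fn_prod {ι : Type} [Fintype ι] [DecidableEq ι] {β : ι → Type} [∀ i, Fintype (β i)]
    (g : ∀ i, β i → ℝ) : (∑ f : ∀ i, β i, ∏ i, g i (f i)) = ∏ i, ∑ b, g i b :=
  (Fintype.prod_sum g).symm

variable {S A O : Type} [Fintype S] [DecidableEq S] [Fintype A] [DecidableEq A] [Fintype O]

lemma envPolProb_nonneg (μ : Env S A O) {m : ℕ} (ep : EnvPol S A O m) :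
    0 ≤ envPolProb μ ep := by
  refine mul_nonneg (μ.T0_nonneg _) (mul_nonneg ?_ ?_)
  · exact Finset.prod_nonneg fun s _ => Finset.prod_nonneg fun a _ =>
      Finset.prod_nonneg fun i _ => μ.T_nonneg _ _ _
  · exact Finset.prod_nonneg fun s _ => Finset.prod_nonneg fun i _ => μ.Obs_nonneg _ _

lemma sum_envPolProb (μ : Env S A O) (m : ℕ) :
    ∑ ep : EnvPol S A O m, envPolProb μ ep = 1 := by
  have hT : (∑ f : S → A → Fin m → S, ∏ s, ∏ a, ∏ i, μ.T s a (f s a i)) = 1 := by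
    rw [sum_fn_prod (fun s (φ : A → Fin m → S) => ∏ a, ∏ i, μ.T s a (φ a i))]
    have : ∀ s : S, (∑ φ : A → Fin m → S, ∏ a, ∏ i, μ.T s a (φ a i)) = 1 := by
      intro s
      rw [sum_fn_prod (fun a (ψ : Fin m → S) => ∏ i, μ.T s a (ψ i))]
      have : ∀ a : A, (∑ ψ : Fin m → S, ∏ i, μ.T s a (ψ i)) = 1 := by
        intro a
        rw [sum_fn_prod (fun (_ : Fin m) (s' : S) => μ.T s a s')]
        simp [μ.T_sum]
      simp [this]
    simp [this]
  have hO : (∑ g : S → Fin (m+1) → O, ∏ s, ∏ i, μ.Obs s (g s i)) = 1 := by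
    rw [sum_fn_prod (fun s (ψ : Fin (m+1) → O) => ∏ i, μ.Obs s (ψ i))]
    have : ∀ s : S, (∑ ψ : Fin (m+1) → O, ∏ i, μ.Obs s (ψ i)) = 1 := by
      intro s
      rw [sum_fn_prod (fun (_ : Fin (m+1)) (o : O) => μ.Obs s o)]
      simp [μ.Obs_sum]
    simp [this]
  calc ∑ ep : EnvPol S A O m, envPolProb μ ep
      = ∑ s, ∑ fg : (S → A → Fin m → S) × (S → Fin (m+1) → O),
          μ.T0 s * ((∏ s', ∏ a, ∏ i, μ.T s' a (fg.1 s' a i)) *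
            ∏ s', ∏ i, μ.Obs s' (fg.2 s' i)) := by
        rw [Fintype.sum_prod_type]; rfl
    _ = (∑ s, μ.T0 s) *
          ((∑ f : S → A → Fin m → S, ∏ s', ∏ a, ∏ i, μ.T s' a (f s' a i)) *
           (∑ g : S → Fin (m+1) → O, ∏ s', ∏ i, μ.Obs s' (g s' i))) := by
        rw [Finset.sum_mul]
        refine Finset.sum_congr rfl fun s _ => ?_
        rw [← Finset.mul_sum]
        congr 1
        rw [Fintype.sum_mul_sum]
        exact Fintype.sum_prod_type _
    _ = 1 := by rw [μ.T0_sum, hT, hO]; ring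

variable (S A O) in
abbrev DSt (m : ℕ) := EnvPol S A O m × S × Fin (m + 1)

noncomputable def dStep {m : ℕ} (x : DSt S A O m) (a : A) : DSt S A O m :=
  ⟨x.1, (if h : (x.2.2 : ℕ) < m then x.1.2.1 x.2.1 a ⟨x.2.2, h⟩ else x.2.1),
    if h : (x.2.2 : ℕ) < m then ⟨(x.2.2 : ℕ) + 1, by omega⟩ else x.2.2⟩

def dObs {m : ℕ} (x : DSt S A O m) : O := x.1.2.2 x.2.1 x.2.2

noncomputable def detEnv (μ : Env S A O) (m : ℕ) : Env (DSt S A O m) A O where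
  T x a y := if y = dStep x a then 1 else 0
  T0 x := if x.2 = (x.1.1, 0) then envPolProb μ x.1 else 0
  Obs x o := if o = dObs x then 1 else 0
  T_nonneg := by intro s a s'; split <;> norm_num
  T_sum := by intro s a; simp
  T0_nonneg := by
    intro x; split
    · exact envPolProb_nonneg μ _
    · exact le_refl 0
  T0_sum := by
    rw [Fintype.sum_prod_type]
    simp only [Finset.sum_ite_eq']
    simpa using sum_envPolProb μ m
  Obs_nonneg := by intro s o; split <;> norm_num
  Obs_sum := by intro s; simp


noncomputable def canEp {m : ℕ} (x0 : DSt S A O m) : EnvPol (DSt S A O m) A O m :=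
  (x0, fun x a _ => dStep x a, fun x _ => dObs x)

lemma epState_canEp {m : ℕ} (ep : EnvPol S A O m) :
    ∀ l : List (A × O), (hl : l.length ≤ m) →
      epState (canEp (ep, ep.1, (0 : Fin (m+1)))) l
        = (ep, epState ep l, ⟨l.length, by omega⟩)
  | [], _ => rfl
  | (a, o) :: rest, hl => by
      have hr : rest.length < m := by simpa using hl
      have ih := epState_canEp ep rest (le_of_lt hr)
      simp only [epState, dif_pos hr]
      rw [ih]
      simp [canEp, dStep, hr]

lemma epHistProb_canEp {m : ℕ} (ep : EnvPol S A O m) (π : Policy A O) (o0 : O) :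
    ∀ l : List (A × O), (hl : l.length ≤ m) →
      epHistProb (canEp (ep, ep.1, (0 : Fin (m+1)))) π o0 l = epHistProb ep π o0 l
  | [], _ => by simp [epHistProb, canEp, dObs]; congr
  | (a, o) :: rest, hl => by
      have hr : rest.length < m := by simpa using hl
      have ih := epHistProb_canEp ep π o0 rest (le_of_lt hr)
      simp only [epHistProb, dif_pos hr]
      rw [ih, epState_canEp ep rest (le_of_lt hr)]
      simp [canEp, dStep, dObs, hr]

lemma envPolProb_detEnv (μ : Env S A O) (m : ℕ) (ep' : EnvPol (DSt S A O m) A O m) :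
    envPolProb (detEnv μ m) ep' =
      if ep'.2 = ((fun x a _ => dStep x a), (fun x _ => dObs x)) then
        (detEnv μ m).T0 ep'.1 else 0 := by
  rw [envPolProb]
  split
  · rename_i h
    have h1 : ep'.2.1 = fun x a _ => dStep x a := by rw [h]
    have h2 : ep'.2.2 = fun x _ => dObs x := by rw [h]
    rw [h1, h2]
    simp [detEnv]
  · rename_i h
    have hor : ep'.2.1 ≠ (fun x a _ => dStep x a) ∨ ep'.2.2 ≠ (fun x _ => dObs x) := by
      by_contra hc; push_neg at hc; exact h (Prod.ext hc.1 hc.2)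
    rcases hor with h1 | h1
    · have hex : ∃ x a i, ep'.2.1 x a i ≠ dStep x a := by
        by_contra hc; push_neg at hc
        exact h1 (funext fun x => funext fun a => funext fun i => hc x a i)
      obtain ⟨x, a, i, hx⟩ := hex
      have hz : (∏ s, ∏ a, ∏ i, (detEnv μ m).T s a (ep'.2.1 s a i)) = 0 := by
        refine Finset.prod_eq_zero (Finset.mem_univ x) ?_
        refine Finset.prod_eq_zero (Finset.mem_univ a) ?_
        refine Finset.prod_eq_zero (Finset.mem_univ i) ?_
        simp [detEnv, hx]
      rw [hz]; ring
    · have hex : ∃ x i, ep'.2.2 x i ≠ dObs x := by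
        by_contra hc; push_neg at hc
        exact h1 (funext fun x => funext fun i => hc x i)
      obtain ⟨x, i, hx⟩ := hex
      have hz : (∏ s, ∏ i, (detEnv μ m).Obs s (ep'.2.2 s i)) = 0 := by
        refine Finset.prod_eq_zero (Finset.mem_univ x) ?_
        refine Finset.prod_eq_zero (Finset.mem_univ i) ?_
        simp [detEnv, hx]
      rw [hz]; ring

lemma detEnv_isDet (μ : Env S A O) (m : ℕ) : IsDetEnv (detEnv μ m) := by
  constructor
  · intro s a
    exact ⟨dStep s a, fun s'' => by simp [detEnv]⟩
  · intro s
    exact ⟨dObs s, fun o' => by simp [detEnv]⟩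

noncomputable instance instDecEqDSt {m : ℕ} : DecidableEq (DSt S A O m) :=
  Classical.decEq _

lemma detEnv_mce (μ : Env S A O) (m : ℕ) : MCounterEquiv μ (detEnv μ m) m := by
  intro n hs πs hlen
  calc ∑ ep : EnvPol S A O m, envPolProb μ ep * ∏ i, epHistProb ep (πs i) (hs i).1 (hs i).2
      = ∑ ep : EnvPol S A O m, envPolProb μ ep *
          ∏ i, epHistProb (canEp ((ep, ep.1, 0) : DSt S A O m)) (πs i) (hs i).1 (hs i).2 := by
        refine Finset.sum_congr rfl fun ep _ => ?_
        congr 1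
        exact Finset.prod_congr rfl fun i _ =>
          (epHistProb_canEp ep (πs i) (hs i).1 (hs i).2 (hlen i)).symm
    _ = ∑ ep : EnvPol S A O m, ∑ p : S × Fin (m+1),
          (if p = (ep.1, 0) then envPolProb μ ep else 0) *
          ∏ i, epHistProb (canEp ((ep, p) : DSt S A O m)) (πs i) (hs i).1 (hs i).2 := by
        refine Finset.sum_congr rfl fun ep _ => ?_
        simp only [ite_mul, zero_mul, Finset.sum_ite_eq', Finset.mem_univ, if_true]
    _ = ∑ x0 : DSt S A O m, (detEnv μ m).T0 x0 *
          ∏ i, epHistProb (canEp x0) (πs i) (hs i).1 (hs i).2 := by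
        rw [Fintype.sum_prod_type (f := fun x0 : DSt S A O m => (detEnv μ m).T0 x0 *
          ∏ i, epHistProb (canEp x0) (πs i) (hs i).1 (hs i).2)]
        refine Finset.sum_congr rfl fun ep _ => Finset.sum_congr rfl fun p _ => ?_
        rfl
    _ = ∑ ep : EnvPol (DSt S A O m) A O m, envPolProb (detEnv μ m) ep *
          ∏ i, epHistProb ep (πs i) (hs i).1 (hs i).2 := by
        symm
        simp only [envPolProb_detEnv]
        rw [Fintype.sum_prod_type]
        refine Finset.sum_congr rfl fun x0 _ => ?_
        simp only [ite_mul, zero_mul, Finset.sum_ite_eq', Finset.mem_univ, if_true]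
        rfl

end CFDet

/-- For every `m` and every environment `μ`, there exists an environment
`μ'` that is `m`-counterfactually equivalent to `μ` and whose transition and observation
kernels are both deterministic (point masses), so that all stochasticity of `μ'` resides
in its initial distribution. -/
theorem exists_deterministic_counterfactually_equivalent
    {S A O : Type} [Fintype S] [DecidableEq S] [Fintype A] [DecidableEq A] [Fintype O]
    (m : ℕ) (μ : Env S A O) :
    ∃ (S' : Type) (_ : Fintype S') (_ : DecidableEq S') (μ' : Env S' A O),
      IsDetEnv μ' ∧ MCounterEquiv μ μ' m := by
  exact ⟨CFDet.DSt S A O m, inferInstance, CFDet.instDecEqDSt, CFDet.detEnv μ m,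
    CFDet.detEnv_isDet μ m, CFDet.detEnv_mce μ m⟩
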